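/- If x ∈ 𝕊¹ and R is a rotation of the plane through an angle θ with θ/π irrational, then the orbit {R^n x : n ∈ ℕ} is equidistributed on the unit circle 𝕊¹ (with respect to normalized arc-length measure). -/

import Mathlib

open scoped Classical

/-- Rotation of ℝ² through the angle θ. -/
noncomputable def rot (θ : ℝ) (p : ℝ × ℝ) : ℝ × ℝ :=
  (Real.cos θ * p.1 - Real.sin θ * p.2, Real.sin θ * p.1 + Real.cos θ * p.2)

open MeasureTheory Filter Set Real AddCircle

instance fact_two_pi_pos : Fact (0 < 2 * Real.pi) := ⟨by positivity⟩

lemma exists_angle {x : ℝ × ℝ} (hx : x.1^2 + x.2^2 = 1) :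
    ∃ φ : ℝ, x = (Real.cos φ, Real.sin φ) := by
  set z : ℂ := ⟨x.1, x.2⟩ with hz
  have habs : ‖z‖ = 1 := by
    have h2 : ‖z‖ ^ 2 = 1 := by
      rw [Complex.sq_norm, Complex.normSq_mk, ← hx]; ring
    nlinarith [norm_nonneg z]
  refine ⟨z.arg, ?_⟩
  have := Complex.norm_mul_cos_add_sin_mul_I z
  rw [habs] at this
  simp only [Complex.ofReal_one, one_mul] at this
  have h1 := congrArg Complex.re this
  have h2 := congrArg Complex.im this
  simp [z] at h1 h2
  exact Prod.ext h1.symm h2.symm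

lemma rot_iterate (θ φ : ℝ) (n : ℕ) :
    (rot θ)^[n] (Real.cos φ, Real.sin φ) = (Real.cos (φ + n * θ), Real.sin (φ + n * θ)) := by
  induction n with
  | zero => simp
  | succ n ih =>
    rw [Function.iterate_succ_apply', ih, rot]
    push_cast
    simp only [Prod.mk.injEq]
    rw [show φ + (n+1) * θ = θ + (φ + n*θ) by ring]
    simp only [Real.cos_add, Real.sin_add]
    constructor <;> trivial

lemma cos_sin_eq_iff {s t : ℝ} :
    (Real.cos s = Real.cos t ∧ Real.sin s = Real.sin t) ↔ ∃ k : ℤ, s = t + k * (2 * Real.pi) := by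
  constructor
  · rintro ⟨hc, hs⟩
    have he : Complex.exp (s * Complex.I) = Complex.exp (t * Complex.I) := by
      rw [Complex.exp_mul_I, Complex.exp_mul_I, ← Complex.ofReal_cos s, ← Complex.ofReal_sin s,
        ← Complex.ofReal_cos t, ← Complex.ofReal_sin t, hc, hs]
    rw [Complex.exp_eq_exp_iff_exists_int] at he
    obtain ⟨n, hn⟩ := he
    refine ⟨n, ?_⟩
    have h : (s : ℂ) = t + n * (2 * Real.pi) := by
      apply mul_right_cancel₀ Complex.I_ne_zero
      rw [hn]; ring
    exact_mod_cast h
  · rintro ⟨k, rfl⟩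
    exact ⟨Real.cos_add_int_mul_two_pi t k, Real.sin_add_int_mul_two_pi t k⟩

lemma geom_avg_zero {z : ℂ} (hz : z ≠ 1) (hnorm : ‖z‖ = 1) :
    Tendsto (fun N : ℕ => (∑ n ∈ Finset.range N, z ^ n) / N) atTop (nhds 0) := by
  have key : ∀ N : ℕ, ‖(∑ n ∈ Finset.range N, z ^ n) / N‖ ≤ (2 / ‖z - 1‖) / N := by
    intro N
    rw [norm_div, Complex.norm_natCast, geom_sum_eq hz, norm_div]
    have hz1 : (0:ℝ) < ‖z - 1‖ := norm_pos_iff.mpr (sub_ne_zero.mpr hz)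
    have hb : ‖z ^ N - 1‖ ≤ 2 := by
      calc ‖z ^ N - 1‖ ≤ ‖z ^ N‖ + ‖(1:ℂ)‖ := norm_sub_le _ _
      _ ≤ 2 := by rw [norm_pow, hnorm]; norm_num
    gcongr
  exact squeeze_zero_norm key (tendsto_const_div_atTop_nhds_zero_nat _)

lemma fourier_orbit_apply {k : ℤ} (θ φ : ℝ) (n : ℕ) :
    fourier k ((↑(φ + n * θ) : AddCircle (2 * Real.pi)))
      = Complex.exp (k * φ * Complex.I) * Complex.exp (k * θ * Complex.I) ^ n := by
  rw [fourier_coe_apply, ← Complex.exp_nat_mul, ← Complex.exp_add]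
  congr 1
  have h : (2 * Real.pi : ℂ) ≠ 0 := by simp [Real.pi_ne_zero]
  field_simp
  push_cast
  ring

lemma exp_ne_one {θ : ℝ} (hθ : Irrational (θ / Real.pi)) {k : ℤ} (hk : k ≠ 0) :
    Complex.exp (k * θ * Complex.I) ≠ 1 := by
  intro h
  rw [Complex.exp_eq_one_iff] at h
  obtain ⟨m, hm⟩ := h
  have hI : (k * θ : ℂ) = m * (2 * Real.pi) := by
    apply mul_right_cancel₀ Complex.I_ne_zero
    rw [hm]; ring
  have hr : (k : ℝ) * θ = m * (2 * Real.pi) := by exact_mod_cast hI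
  have hk' : (k : ℝ) ≠ 0 := Int.cast_ne_zero.mpr hk
  have heq : θ / Real.pi = ((2 * m / k : ℚ) : ℝ) := by
    push_cast
    field_simp
    nlinarith [hr]
  exact hθ ⟨_, heq.symm⟩

lemma fourier_avg_zero {θ : ℝ} (hθ : Irrational (θ / Real.pi)) (φ : ℝ) {k : ℤ} (hk : k ≠ 0) :
    Tendsto (fun N : ℕ =>
        (∑ n ∈ Finset.range N, fourier k ((↑(φ + n * θ) : AddCircle (2 * Real.pi)))) / N)
      atTop (nhds 0) := by
  simp only [fourier_orbit_apply, ← Finset.mul_sum]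
  have h := geom_avg_zero (exp_ne_one hθ hk) (by
    rw [Complex.norm_exp]
    norm_num [Complex.mul_I_re, Complex.mul_re, Complex.ofReal_re, Complex.ofReal_im])
  have := h.const_mul (Complex.exp (k * φ * Complex.I))
  simpa [mul_div_assoc] using this

lemma integral_fourier_zero {k : ℤ} (hk : k ≠ 0) :
    ∫ x : AddCircle (2 * Real.pi), fourier k x ∂haarAddCircle = 0 :=
  integral_eq_zero_of_add_right_eq_neg (fourier_add_half_inv_index hk Fact.out)

lemma cmap_integrable (f : C(AddCircle (2 * Real.pi), ℂ)) : Integrable f haarAddCircle :=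
  f.continuous.integrable_of_hasCompactSupport (HasCompactSupport.of_compactSpace f)

lemma avg_tendsto_complex {θ : ℝ} (hθ : Irrational (θ / Real.pi)) (φ : ℝ)
    (f : C(AddCircle (2 * Real.pi), ℂ)) :
    Tendsto (fun N : ℕ =>
        (∑ n ∈ Finset.range N, f ((↑(φ + n * θ) : AddCircle (2 * Real.pi)))) / N) atTop
      (nhds (∫ x, f x ∂haarAddCircle)) := by
  have hspan : ∀ g ∈ Submodule.span ℂ (Set.range (@fourier (2 * Real.pi))),
      Tendsto (fun N : ℕ =>
        (∑ n ∈ Finset.range N, g ((↑(φ + n * θ) : AddCircle (2 * Real.pi)))) / N) atTop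
      (nhds (∫ x, g x ∂haarAddCircle)) := by
    intro g hg
    induction hg using Submodule.span_induction with
    | mem g hg =>
      obtain ⟨k, rfl⟩ := hg
      by_cases hk : k = 0
      · subst hk
        simp only [fourier_zero, Finset.sum_const, Finset.card_range, nsmul_eq_mul, mul_one]
        have h1 : (∫ _x : AddCircle (2 * Real.pi), (1:ℂ) ∂haarAddCircle) = 1 := by simp
        rw [h1]
        apply Tendsto.congr' (f₁ := fun _ : ℕ => (1:ℂ)) ?_ tendsto_const_nhds
        filter_upwards [eventually_ge_atTop 1] with N hN
        rw [div_self]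
        exact_mod_cast (Nat.pos_of_ne_zero (by omega)).ne'
      · rw [integral_fourier_zero hk]
        exact fourier_avg_zero hθ φ hk
    | zero => simpa using tendsto_const_nhds
    | add g₁ g₂ hg₁ hg₂ ih₁ ih₂ =>
      have h := ih₁.add ih₂
      rw [← integral_add (cmap_integrable g₁) (cmap_integrable g₂)] at h
      simp only [ContinuousMap.add_apply, Finset.sum_add_distrib, add_div]
      exact h
    | smul c g hg ih =>
      have h := ih.const_mul c
      have hint : (∫ x, (c • g) x ∂haarAddCircle) = c * ∫ x, g x ∂haarAddCircle := by
        simp only [ContinuousMap.smul_apply, smul_eq_mul]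
        exact integral_const_mul c _
      rw [hint]
      simp only [ContinuousMap.smul_apply, smul_eq_mul, ← Finset.mul_sum, mul_div_assoc]
      exact h
  rw [Metric.tendsto_nhds]
  intro ε hε
  have hf_cl : f ∈ closure ((Submodule.span ℂ (Set.range (@fourier (2 * Real.pi)))) : Set _) := by
    have : f ∈ (Submodule.span ℂ (Set.range (@fourier (2 * Real.pi)))).topologicalClosure := by
      rw [span_fourier_closure_eq_top]; trivial
    rwa [← SetLike.mem_coe, Submodule.topologicalClosure_coe] at this
  obtain ⟨g, hg_mem, hfg⟩ := Metric.mem_closure_iff.1 hf_cl (ε/3) (by linarith)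
  have hgt := (Metric.tendsto_nhds.1 (hspan g hg_mem)) (ε/3) (by linarith)
  filter_upwards [hgt, eventually_ge_atTop 1] with N h2 h1
  have hN0 : (0:ℝ) < N := by exact_mod_cast h1
  set pt : ℕ → AddCircle (2 * Real.pi) := fun n => ((φ + n * θ : ℝ) : AddCircle (2 * Real.pi))
  have bound1 : dist ((∑ n ∈ Finset.range N, f (pt n)) / N)
      ((∑ n ∈ Finset.range N, g (pt n)) / N) ≤ dist f g := by
    rw [dist_eq_norm, div_sub_div_same, ← Finset.sum_sub_distrib, norm_div,
      Complex.norm_natCast]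
    rw [div_le_iff₀ hN0]
    calc ‖∑ n ∈ Finset.range N, (f (pt n) - g (pt n))‖
        ≤ ∑ n ∈ Finset.range N, ‖f (pt n) - g (pt n)‖ := norm_sum_le _ _
      _ ≤ ∑ _n ∈ Finset.range N, dist f g := by
          apply Finset.sum_le_sum
          intro i _
          have : ‖(f - g) (pt i)‖ ≤ ‖f - g‖ := ContinuousMap.norm_coe_le_norm (f - g) (pt i)
          simpa [dist_eq_norm, ContinuousMap.sub_apply] using this
      _ = dist f g * N := by simp [Finset.sum_const, mul_comm]
  have bound3 : dist (∫ x, g x ∂haarAddCircle) (∫ x, f x ∂haarAddCircle) ≤ dist f g := by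
    rw [dist_eq_norm, ← integral_sub (cmap_integrable g) (cmap_integrable f)]
    have := norm_integral_le_of_norm_le_const (μ := haarAddCircle)
      (f := fun x => g x - f x) (C := ‖g - f‖) (Eventually.of_forall fun x => by
        simpa [ContinuousMap.sub_apply] using ContinuousMap.norm_coe_le_norm (g - f) x)
    simpa [measure_univ, dist_eq_norm, norm_sub_rev] using this
  calc dist ((∑ n ∈ Finset.range N, f (pt n)) / N) (∫ x, f x ∂haarAddCircle)
      ≤ dist ((∑ n ∈ Finset.range N, f (pt n)) / N) ((∑ n ∈ Finset.range N, g (pt n)) / N)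
        + dist ((∑ n ∈ Finset.range N, g (pt n)) / N) (∫ x, g x ∂haarAddCircle)
        + dist (∫ x, g x ∂haarAddCircle) (∫ x, f x ∂haarAddCircle) := dist_triangle4 _ _ _ _
    _ < ε := by
        have := bound1.trans_lt hfg
        have := bound3.trans_lt hfg
        linarith

lemma avg_tendsto_real {θ : ℝ} (hθ : Irrational (θ / Real.pi)) (φ : ℝ)
    (g : C(AddCircle (2 * Real.pi), ℝ)) :
    Tendsto (fun N : ℕ =>
        (∑ n ∈ Finset.range N, g ((↑(φ + n * θ) : AddCircle (2 * Real.pi)))) / N) atTop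
      (nhds (∫ x, g x ∂haarAddCircle)) := by
  let gC : C(AddCircle (2 * Real.pi), ℂ) :=
    ⟨fun y => (g y : ℂ), Complex.continuous_ofReal.comp g.continuous⟩
  have h := avg_tendsto_complex hθ φ gC
  have hint : (∫ x, gC x ∂haarAddCircle) = ((∫ x, g x ∂haarAddCircle : ℝ) : ℂ) :=
    integral_ofReal
  rw [hint] at h
  have heq : ∀ N : ℕ, (∑ n ∈ Finset.range N, gC ((↑(φ + n * θ) : AddCircle (2 * Real.pi)))) / N
      = (((∑ n ∈ Finset.range N, g ((↑(φ + n * θ) : AddCircle (2 * Real.pi)))) / N : ℝ) : ℂ) := by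
    intro N
    rw [Complex.ofReal_div, Complex.ofReal_sum, Complex.ofReal_natCast]
    rfl
  simp only [heq] at h
  have hre := (Complex.continuous_re.tendsto _).comp h
  simp only [Function.comp_def, Complex.ofReal_re] at hre
  exact hre

lemma addCircle_norm_coe_le {T : ℝ} (hT : 0 < T) (u : ℝ) : ‖(u : AddCircle T)‖ ≤ |u| := by
  rw [AddCircle.norm_eq' T hT]
  have h := round_le (T⁻¹ * u) 0
  simp only [Int.cast_zero, sub_zero] at h
  calc T * |T⁻¹ * u - round (T⁻¹ * u)| ≤ T * |T⁻¹ * u| := by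
        apply mul_le_mul_of_nonneg_left h hT.le
    _ = |u| := by
        rw [abs_mul, abs_inv, abs_of_pos hT]
        field_simp
    
lemma addCircle_exists_rep {T : ℝ} (hT : 0 < T) (y : AddCircle T) (c : ℝ) :
    ∃ x : ℝ, (x : AddCircle T) = y ∧ |x - c| = dist y ((c : ℝ) : AddCircle T) := by
  induction y using QuotientAddGroup.induction_on with | H v =>
  refine ⟨c + ((v - c) - round (T⁻¹ * (v - c)) * T), ?_, ?_⟩
  · have hz : (((round (T⁻¹ * (v - c)) : ℝ) * T : ℝ) : AddCircle T) = 0 := by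
      apply (QuotientAddGroup.eq_zero_iff _).2
      exact ⟨round (T⁻¹ * (v - c)), by simp [zsmul_eq_mul]⟩
    have : ((c + ((v - c) - round (T⁻¹ * (v - c)) * T) : ℝ) : AddCircle T)
        = ((v : ℝ) : AddCircle T) - ((((round (T⁻¹ * (v - c)) : ℝ)) * T : ℝ) : AddCircle T) := by
      rw [show c + ((v - c) - (round (T⁻¹ * (v - c)) : ℝ) * T)
          = v - (round (T⁻¹ * (v - c)) : ℝ) * T by ring]
      push_cast
      rfl
    rw [this, hz, sub_zero]
  · have hd : dist (((v:ℝ) : AddCircle T)) ((c : ℝ) : AddCircle T) = ‖((v - c : ℝ) : AddCircle T)‖ := by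
      rw [dist_eq_norm]
      congr 1
    rw [hd, AddCircle.norm_eq]
    ring_nf

lemma addCircle_coe_eq_coe_iff {T : ℝ} {s t : ℝ} :
    ((s : AddCircle T) = (t : AddCircle T)) ↔ ∃ k : ℤ, s = t + k * T := by
  rw [QuotientAddGroup.eq]
  constructor
  · rintro ⟨k, hk⟩
    have hk' : (k:ℝ) * T = -s + t := by simpa [zsmul_eq_mul] using hk
    exact ⟨-k, by push_cast; linarith⟩
  · rintro ⟨k, rfl⟩
    exact ⟨-k, by push_cast [zsmul_eq_mul]; ring⟩

/-- trapezoidal bump function on the circle -/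
noncomputable def bump (c : AddCircle (2 * Real.pi)) (s δ : ℝ) :
    C(AddCircle (2 * Real.pi), ℝ) :=
  ⟨fun y => min 1 (max 0 ((s - dist y c) / δ)),
    continuous_const.min (continuous_const.max
      ((continuous_const.sub (continuous_id.dist continuous_const)).div_const δ))⟩

lemma bump_apply (c : AddCircle (2 * Real.pi)) (s δ : ℝ) (y : AddCircle (2 * Real.pi)) :
    bump c s δ y = min 1 (max 0 ((s - dist y c) / δ)) := rfl

lemma bump_nonneg (c : AddCircle (2 * Real.pi)) (s δ : ℝ) (y : AddCircle (2 * Real.pi)) :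
    0 ≤ bump c s δ y := le_min zero_le_one (le_max_left _ _)

lemma bump_le_one (c : AddCircle (2 * Real.pi)) (s δ : ℝ) (y : AddCircle (2 * Real.pi)) :
    bump c s δ y ≤ 1 := min_le_left _ _

lemma bump_eq_one {c : AddCircle (2 * Real.pi)} {s δ : ℝ} (hδ : 0 < δ)
    {y : AddCircle (2 * Real.pi)} (h : dist y c ≤ s - δ) : bump c s δ y = 1 := by
  rw [bump_apply, min_eq_left]
  apply le_max_of_le_right
  rw [le_div_iff₀ hδ]
  linarith

lemma bump_eq_zero {c : AddCircle (2 * Real.pi)} {s δ : ℝ} (hδ : 0 < δ)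
    {y : AddCircle (2 * Real.pi)} (h : s ≤ dist y c) : bump c s δ y = 0 := by
  rw [bump_apply, max_eq_left, min_eq_right zero_le_one]
  apply div_nonpos_of_nonpos_of_nonneg (by linarith) hδ.le

lemma cmap_integrable_real (f : C(AddCircle (2 * Real.pi), ℝ)) : Integrable f haarAddCircle :=
  f.continuous.integrable_of_hasCompactSupport (HasCompactSupport.of_compactSpace f)

lemma haar_closedBall_toReal (c : AddCircle (2 * Real.pi)) {ρ : ℝ} (hρ : 0 ≤ ρ) :
    (haarAddCircle (Metric.closedBall c ρ)).toReal = min (2 * Real.pi) (2 * ρ) / (2 * Real.pi) := by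
  have hT : (0:ℝ) < 2 * Real.pi := by positivity
  have hv : volume (Metric.closedBall c ρ) = ENNReal.ofReal (min (2 * Real.pi) (2 * ρ)) :=
    AddCircle.volume_closedBall _ ρ
  rw [volume_eq_smul_haarAddCircle, Measure.smul_apply, smul_eq_mul] at hv
  have := congrArg ENNReal.toReal hv
  rw [ENNReal.toReal_mul, ENNReal.toReal_ofReal hT.le,
    ENNReal.toReal_ofReal (le_min hT.le (by linarith))] at this
  field_simp
  linarith [this]

lemma le_haar_closedBall (c : AddCircle (2 * Real.pi)) (ρ : ℝ) :
    min (2 * Real.pi) (2 * ρ) / (2 * Real.pi) ≤ (haarAddCircle (Metric.closedBall c ρ)).toReal := by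
  rcases le_or_gt 0 ρ with h | h
  · rw [haar_closedBall_toReal c h]
  · rw [Metric.closedBall_eq_empty.2 h]
    simp only [measure_empty, ENNReal.toReal_zero]
    apply div_nonpos_of_nonpos_of_nonneg (min_le_right _ _ |>.trans (by linarith)) (by positivity)

lemma integral_bump_le (c : AddCircle (2 * Real.pi)) {s δ : ℝ} (hδ : 0 < δ) (hs : 0 ≤ s) :
    ∫ y, bump c s δ y ∂haarAddCircle ≤ min (2 * Real.pi) (2 * s) / (2 * Real.pi) := by
  have hle : ∀ y, bump c s δ y ≤ (Metric.closedBall c s).indicator (fun _ => (1:ℝ)) y := by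
    intro y
    by_cases h : y ∈ Metric.closedBall c s
    · rw [indicator_of_mem h]; exact bump_le_one _ _ _ _
    · rw [indicator_of_notMem h]
      rw [Metric.mem_closedBall, not_le] at h
      exact le_of_eq (bump_eq_zero hδ h.le)
  calc ∫ y, bump c s δ y ∂haarAddCircle
      ≤ ∫ y, (Metric.closedBall c s).indicator (fun _ => (1:ℝ)) y ∂haarAddCircle :=
        integral_mono (cmap_integrable_real _) ((integrable_const 1).indicator
          Metric.isClosed_closedBall.measurableSet) hle
    _ = (haarAddCircle (Metric.closedBall c s)).toReal :=  by
        rw [integral_indicator_const (1:ℝ) Metric.isClosed_closedBall.measurableSet, smul_eq_mul, mul_one, measureReal_def]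
    _ = min (2 * Real.pi) (2 * s) / (2 * Real.pi) := haar_closedBall_toReal c hs

lemma le_integral_bump (c : AddCircle (2 * Real.pi)) {s δ : ℝ} (hδ : 0 < δ) :
    min (2 * Real.pi) (2 * (s - δ)) / (2 * Real.pi) ≤ ∫ y, bump c s δ y ∂haarAddCircle := by
  have hle : ∀ y, (Metric.closedBall c (s - δ)).indicator (fun _ => (1:ℝ)) y ≤ bump c s δ y := by
    intro y
    by_cases h : y ∈ Metric.closedBall c (s - δ)
    · rw [indicator_of_mem h]
      exact le_of_eq (bump_eq_one hδ (Metric.mem_closedBall.1 h)).symm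
    · rw [indicator_of_notMem h]
      exact bump_nonneg _ _ _ _
  calc min (2 * Real.pi) (2 * (s - δ)) / (2 * Real.pi)
      ≤ (haarAddCircle (Metric.closedBall c (s - δ))).toReal := le_haar_closedBall c _
    _ = ∫ y, (Metric.closedBall c (s - δ)).indicator (fun _ => (1:ℝ)) y ∂haarAddCircle := by
        rw [integral_indicator_const (1:ℝ) Metric.isClosed_closedBall.measurableSet, smul_eq_mul, mul_one, measureReal_def]
    _ ≤ ∫ y, bump c s δ y ∂haarAddCircle :=
        integral_mono ((integrable_const 1).indicator Metric.isClosed_closedBall.measurableSet)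
          (cmap_integrable_real _) hle

/-- Weyl equidistribution on the circle: if θ/π is irrational and x ∈ 𝕊¹, then the
orbit {R^n x} is equidistributed: for every arc {(cos t, sin t) : t ∈ [a,b)} of the
circle, the proportion of n < N landing in the arc tends to its normalized length. -/
theorem orbit_equidistributed_on_circle
    (θ : ℝ) (hθ : Irrational (θ / Real.pi))
    (x : ℝ × ℝ) (hx : x.1^2 + x.2^2 = 1)
    (a b : ℝ) (hab : a ≤ b) (hlen : b - a ≤ 2 * Real.pi) :
    Filter.Tendsto
      (fun N : ℕ =>
        ((Finset.range N).filter
          (fun n => ∃ t ∈ Set.Ico a b, (rot θ)^[n] x = (Real.cos t, Real.sin t))).card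
          / (N : ℝ))
      Filter.atTop (nhds ((b - a) / (2 * Real.pi))) := by
  have hπ : (0:ℝ) < Real.pi := Real.pi_pos
  have hT : (0:ℝ) < 2 * Real.pi := by positivity
  obtain ⟨φ, rfl⟩ := exists_angle hx
  set P : ℕ → Prop := fun n => ∃ t ∈ Set.Ico a b,
    (rot θ)^[n] (Real.cos φ, Real.sin φ) = (Real.cos t, Real.sin t) with hP
  set m : ℝ := (a + b) / 2 with hm
  set r : ℝ := (b - a) / 2 with hr'
  have hr : 0 ≤ r := by linarith [hr']
  set c : AddCircle (2 * Real.pi) := ((m : ℝ) : AddCircle (2 * Real.pi))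
  set pt : ℕ → AddCircle (2 * Real.pi) := fun n => ((φ + n * θ : ℝ) : AddCircle (2 * Real.pi))
  set A : Set (AddCircle (2 * Real.pi)) :=
    (fun t : ℝ => ((t : ℝ) : AddCircle (2 * Real.pi))) '' Set.Ico a b
  have hmem : ∀ n : ℕ, P n ↔ pt n ∈ A := by
    intro n
    constructor
    · rintro ⟨t, ht, heq⟩
      rw [rot_iterate] at heq
      obtain ⟨h1, h2⟩ := Prod.ext_iff.1 heq
      obtain ⟨k, hk⟩ := cos_sin_eq_iff.1 ⟨h1, h2⟩
      exact ⟨t, ht, (addCircle_coe_eq_coe_iff.2 ⟨k, hk⟩).symm⟩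
    · rintro ⟨t, ht, hte⟩
      obtain ⟨k, hk⟩ := addCircle_coe_eq_coe_iff.1 hte.symm
      refine ⟨t, ht, ?_⟩
      rw [rot_iterate]
      obtain ⟨h1, h2⟩ := cos_sin_eq_iff.2 ⟨k, hk⟩
      exact Prod.ext h1 h2
  have harc : ∀ y ∈ A, dist y c ≤ r := by
    rintro y ⟨t, ht, rfl⟩
    have hdd : dist ((t : ℝ) : AddCircle (2 * Real.pi)) c
        = ‖((t - m : ℝ) : AddCircle (2 * Real.pi))‖ := by
      rw [dist_eq_norm]
      congr 1
    rw [hdd]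
    refine (addCircle_norm_coe_le hT _).trans ?_
    rw [abs_le]
    obtain ⟨ht1, ht2⟩ := ht
    exact ⟨by linarith [hm, hr'], by linarith [hm, hr']⟩
  have hball : ∀ (y : AddCircle (2 * Real.pi)) (s : ℝ), s ≤ r → dist y c < s → y ∈ A := by
    intro y s hs hd
    obtain ⟨x', hx', hdist⟩ := addCircle_exists_rep hT y m
    rw [← hdist] at hd
    rw [abs_lt] at hd
    have hx'ab : x' ∈ Set.Ico a b := by
      constructor
      · nlinarith [hd.1, hd.2, hs, hm, hr']
      · nlinarith [hd.1, hd.2, hs, hm, hr']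
    exact ⟨x', hx'ab, hx'⟩
  have hcard : ∀ N : ℕ, (((Finset.range N).filter P).card : ℝ)
      = ∑ n ∈ Finset.range N, (if P n then (1:ℝ) else 0) := by
    intro N
    rw [Finset.card_filter]
    push_cast
    rfl
  rw [Metric.tendsto_nhds]
  intro ε hε
  set L : ℝ := (b - a) / (2 * Real.pi) with hLdef
  set δ : ℝ := Real.pi * ε / 8 with hδdef
  have hδ : 0 < δ := by positivity
  set gp := bump c (r + δ) δ with hgpdef
  set gm := bump c (r - δ) δ with hgmdef
  have hptP : ∀ n : ℕ, gm (pt n) ≤ (if P n then (1:ℝ) else 0)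
      ∧ (if P n then (1:ℝ) else 0) ≤ gp (pt n) := by
    intro n
    by_cases hp : P n
    · rw [if_pos hp]
      have hin : pt n ∈ A := (hmem n).1 hp
      refine ⟨bump_le_one _ _ _ _, le_of_eq (bump_eq_one hδ ?_).symm⟩
      have := harc _ hin
      linarith
    · rw [if_neg hp]
      refine ⟨le_of_eq (bump_eq_zero hδ ?_), bump_nonneg _ _ _ _⟩
      by_contra hcon
      push_neg at hcon
      exact hp ((hmem n).2 (hball (pt n) (r - δ) (by linarith) hcon))
  have hIp : ∫ y, gp y ∂haarAddCircle ≤ L + ε / 8 := by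
    refine (integral_bump_le c hδ (by linarith)).trans ?_
    have h1 : min (2 * Real.pi) (2 * (r + δ)) / (2 * Real.pi) ≤ (2 * (r + δ)) / (2 * Real.pi) :=
      div_le_div_of_nonneg_right (min_le_right _ _) hT.le
    refine h1.trans (le_of_eq ?_)
    rw [hr', hLdef, hδdef]
    field_simp
  have hIm : L - ε / 4 ≤ ∫ y, gm y ∂haarAddCircle := by
    refine le_trans ?_ (le_integral_bump c hδ)
    have h2 : min (2 * Real.pi) (2 * (r - δ - δ)) = 2 * (r - δ - δ) :=
      min_eq_right (by linarith [hr'])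
    rw [h2]
    apply le_of_eq
    rw [hr', hLdef, hδdef]
    field_simp
    ring
  have hgpT := Metric.tendsto_nhds.1 (avg_tendsto_real hθ φ gp) (ε / 8) (by positivity)
  have hgmT := Metric.tendsto_nhds.1 (avg_tendsto_real hθ φ gm) (ε / 8) (by positivity)
  filter_upwards [hgpT, hgmT, eventually_ge_atTop 1] with N hp hm2 hN1
  have hN0 : (0:ℝ) < N := by exact_mod_cast hN1
  rw [Real.dist_eq] at hp hm2 ⊢
  have hCp : (((Finset.range N).filter P).card : ℝ) / N
      ≤ (∑ n ∈ Finset.range N, gp (pt n)) / N := by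
    rw [hcard N]
    exact div_le_div_of_nonneg_right (Finset.sum_le_sum fun i _ => (hptP i).2) hN0.le
  have hCm : (∑ n ∈ Finset.range N, gm (pt n)) / N
      ≤ (((Finset.range N).filter P).card : ℝ) / N := by
    rw [hcard N]
    exact div_le_div_of_nonneg_right (Finset.sum_le_sum fun i _ => (hptP i).1) hN0.le
  have h1 := abs_lt.1 hp
  have h2 := abs_lt.1 hm2
  rw [abs_lt]
  constructor
  · linarith [h2.1, h2.2, hIm, hCm]
  · linarith [h1.1, h1.2, hIp, hCp]
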